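/- Let L_1, ..., L_m : ℝ^p → ℝ be twice continuously differentiable functions, let q_1, ..., q_m ∈ ℝ, let W ⊆ ℝ^m be an open set, and let w ↦ θ^w be a differentiable map from W to ℝ^p such that for every w ∈ W, Σ_{g=1}^m w_g ∇_θ L_g(θ^w) = 0 and the matrix H(w) = Σ_{g=1}^m w_g ∇²_θ L_g(θ^w) is invertible. Then for every w ∈ W and every index i ∈ {1,...,m}, the partial derivative of the map w ↦ Σ_{g=1}^m q_g L_g(θ^w) with respect to w_i equals −(Σ_{g=1}^m q_g ∇_θ L_g(θ^w))ᵀ H(w)^{-1} ∇_θ L_i(θ^w). -/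

import Mathlib

open scoped BigOperators RealInnerProductSpace

section Aux

variable {E F : Type*} [NormedAddCommGroup F] [InnerProductSpace ℝ F]

lemma aux_fderiv_apply_eq_inner [CompleteSpace F] (f : F → ℝ) (x : F) (v : F) :
    fderiv ℝ f x v = ⟪gradient f x, v⟫ := by
  have : fderiv ℝ f x = InnerProductSpace.toDual ℝ F (gradient f x) := by
    rw [gradient, (InnerProductSpace.toDual ℝ F).apply_symm_apply]
  rw [this, InnerProductSpace.toDual_apply_apply]

lemma aux_grad_diff [CompleteSpace F] {f : F → ℝ} (hf : ContDiff ℝ 2 f) :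
    Differentiable ℝ (gradient f) := by
  have h1 : ContDiff ℝ 1 (fderiv ℝ f) := hf.fderiv_right (by norm_num)
  have : gradient f = fun x => (InnerProductSpace.toDual ℝ F).symm (fderiv ℝ f x) := rfl
  rw [this]
  exact ((InnerProductSpace.toDual ℝ F).symm.differentiable).comp (h1.differentiable one_ne_zero)

end Aux

/-- Derivative of the weighted objective `w ↦ ∑ g, q g * L g (θ w)` with respect to `w i`,
where `θ w` is a stationary point of `θ ↦ ∑ g, w g * L g θ`. -/
theorem implicit_gradient_formula {m p : ℕ}
    (L : Fin m → EuclideanSpace ℝ (Fin p) → ℝ)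
    (hL : ∀ g, ContDiff ℝ 2 (L g))
    (q : Fin m → ℝ)
    (W : Set (EuclideanSpace ℝ (Fin m))) (hW : IsOpen W)
    (θ : EuclideanSpace ℝ (Fin m) → EuclideanSpace ℝ (Fin p))
    (hθ : ∀ w ∈ W, DifferentiableAt ℝ θ w)
    (hstat : ∀ w ∈ W, ∑ g, w g • gradient (L g) (θ w) = 0)
    (Hinv : EuclideanSpace ℝ (Fin m) →
      (EuclideanSpace ℝ (Fin p) →L[ℝ] EuclideanSpace ℝ (Fin p)))
    (hHinv : ∀ w ∈ W,
      (∑ g, w g • fderiv ℝ (gradient (L g)) (θ w)).comp (Hinv w) =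
        ContinuousLinearMap.id ℝ (EuclideanSpace ℝ (Fin p)) ∧
      (Hinv w).comp (∑ g, w g • fderiv ℝ (gradient (L g)) (θ w)) =
        ContinuousLinearMap.id ℝ (EuclideanSpace ℝ (Fin p))) :
    ∀ w ∈ W, ∀ i : Fin m,
      fderiv ℝ (fun v => ∑ g, q g * L g (θ v)) w (EuclideanSpace.single i 1) =
        - ⟪∑ g, q g • gradient (L g) (θ w), Hinv w (gradient (L i) (θ w))⟫ := by
  intro w hw i
  set e : EuclideanSpace ℝ (Fin m) := EuclideanSpace.single i 1 with he
  set D : EuclideanSpace ℝ (Fin m) →L[ℝ] EuclideanSpace ℝ (Fin p) := fderiv ℝ θ w with hD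
  set G : Fin m → EuclideanSpace ℝ (Fin p) := fun g => gradient (L g) (θ w) with hG
  set H : EuclideanSpace ℝ (Fin p) →L[ℝ] EuclideanSpace ℝ (Fin p) :=
    ∑ g, w g • fderiv ℝ (gradient (L g)) (θ w) with hH
  have hθw := hθ w hw
  have hDθ : HasFDerivAt θ D w := hθw.hasFDerivAt
  -- derivative of the stationarity map
  have hFd : HasFDerivAt (fun v => ∑ g, v g • gradient (L g) (θ v))
      (∑ g, ((w g) • ((fderiv ℝ (gradient (L g)) (θ w)).comp D)
        + (EuclideanSpace.proj g : EuclideanSpace ℝ (Fin m) →L[ℝ] ℝ).smulRight (G g))) w := by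
    apply HasFDerivAt.fun_sum
    intro g _
    have hc : HasFDerivAt (fun v : EuclideanSpace ℝ (Fin m) => v g)
        (EuclideanSpace.proj g : EuclideanSpace ℝ (Fin m) →L[ℝ] ℝ) w :=
      (EuclideanSpace.proj g : EuclideanSpace ℝ (Fin m) →L[ℝ] ℝ).hasFDerivAt
    have hg : HasFDerivAt (fun v => gradient (L g) (θ v))
        ((fderiv ℝ (gradient (L g)) (θ w)).comp D) w :=
      ((aux_grad_diff (hL g)) (θ w)).hasFDerivAt.comp w hDθ
    exact hc.smul hg
  have hF0 : fderiv ℝ (fun v => ∑ g, v g • gradient (L g) (θ v)) w = 0 := by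
    have hev : (fun v => ∑ g, v g • gradient (L g) (θ v))
        =ᶠ[nhds w] (fun _ => (0 : EuclideanSpace ℝ (Fin p))) := by
      filter_upwards [hW.mem_nhds hw] with v hv using hstat v hv
    rw [hev.fderiv_eq, fderiv_fun_const]
    rfl
  have hsum0 : (∑ g, ((w g) • ((fderiv ℝ (gradient (L g)) (θ w)).comp D)
        + (EuclideanSpace.proj g : EuclideanSpace ℝ (Fin m) →L[ℝ] ℝ).smulRight (G g)))
      = (0 : EuclideanSpace ℝ (Fin m) →L[ℝ] EuclideanSpace ℝ (Fin p)) := by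
    rw [← hFd.fderiv, hF0]
  -- evaluate at e
  have hkey : H (D e) + G i = 0 := by
    have := congrArg (fun (T : EuclideanSpace ℝ (Fin m) →L[ℝ] EuclideanSpace ℝ (Fin p)) => T e)
      hsum0
    simp only [ContinuousLinearMap.sum_apply, ContinuousLinearMap.add_apply,
      ContinuousLinearMap.smul_apply, ContinuousLinearMap.comp_apply,
      ContinuousLinearMap.smulRight_apply, ContinuousLinearMap.zero_apply] at this
    rw [Finset.sum_add_distrib] at this
    have hproj : ∀ g : Fin m,
        ((EuclideanSpace.proj g : EuclideanSpace ℝ (Fin m) →L[ℝ] ℝ) e) • (G g)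
          = (if g = i then (1:ℝ) else 0) • G g := by
      intro g
      simp [he, EuclideanSpace.single_apply]
    rw [Finset.sum_congr rfl (fun g _ => hproj g)] at this
    simp only [ite_smul, one_smul, zero_smul, Finset.sum_ite_eq, Finset.mem_univ,
      if_true] at this
    rw [hH]
    simpa [ContinuousLinearMap.sum_apply, ContinuousLinearMap.smul_apply] using this
  have hDe : D e = - Hinv w (G i) := by
    have h2 := (hHinv w hw).2
    have hid : Hinv w (H (D e)) = D e := by
      have := congrArg (fun (T : EuclideanSpace ℝ (Fin p) →L[ℝ] EuclideanSpace ℝ (Fin p)) =>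
        T (D e)) h2
      simpa [hH] using this
    have hHDe : H (D e) = - G i := by
      have := hkey
      linear_combination (norm := module) this
    rw [← hid, hHDe, map_neg]
  -- derivative of the objective
  have hobj : HasFDerivAt (fun v => ∑ g, q g * L g (θ v))
      (∑ g, q g • ((fderiv ℝ (L g) (θ w)).comp D)) w := by
    apply HasFDerivAt.fun_sum
    intro g _
    exact (((hL g).differentiable two_ne_zero (θ w)).hasFDerivAt.comp w hDθ).const_mul (q g)
  rw [hobj.fderiv]
  simp only [ContinuousLinearMap.sum_apply, ContinuousLinearMap.smul_apply,
    ContinuousLinearMap.comp_apply]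
  have hsub : ∀ g : Fin m, q g • (fderiv ℝ (L g) (θ w)) (D e) = q g * ⟪G g, D e⟫ := by
    intro g
    rw [aux_fderiv_apply_eq_inner]
    rw [hG]
    rfl
  rw [Finset.sum_congr rfl (fun g _ => hsub g)]
  rw [hDe]
  have : ∑ g, q g * ⟪G g, -(Hinv w) (G i)⟫ = ⟪∑ g, q g • G g, -(Hinv w) (G i)⟫ := by
    rw [sum_inner]
    exact Finset.sum_congr rfl (fun g _ => (real_inner_smul_left _ _ _).symm)
  rw [this, inner_neg_right]
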